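/- Equip P = k[x₁,x₂,x₃] with the Poisson bracket {x₁,x₂} = 0, {x₂,x₃} = 2x₁x₂, {x₃,x₁} = x₁². Then for an invertible matrix M = (a_{ij}): (i) φ_M is a graded Poisson automorphism of P if and only if M = [[a,0,0],[0,b,0],[c,d,a]] for some a, b ∈ k \ {0} and c, d ∈ k; (ii) φ_M is a Poisson reflection of P if and only if M = [[1,0,0],[0,ξ,0],[0,d,1]] for some root of unity ξ ≠ 1 and some d ∈ k. -/

import Mathlib

open MvPolynomial

/-- The bracket on `k[x₁,x₂,x₃]` determined by the values `p12 = {x₁,x₂}`, `p23 = {x₂,x₃}`,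
`p31 = {x₃,x₁}` via `{f,g} = Σ_{i<j} (∂f/∂xᵢ·∂g/∂xⱼ − ∂f/∂xⱼ·∂g/∂xᵢ)·{xᵢ,xⱼ}`. -/
noncomputable def jacBracket {k : Type*} [Field k] (p12 p23 p31 : MvPolynomial (Fin 3) k)
    (f g : MvPolynomial (Fin 3) k) : MvPolynomial (Fin 3) k :=
  (pderiv 0 f * pderiv 1 g - pderiv 1 f * pderiv 0 g) * p12 +
    (pderiv 1 f * pderiv 2 g - pderiv 2 f * pderiv 1 g) * p23 +
    (pderiv 2 f * pderiv 0 g - pderiv 0 f * pderiv 2 g) * p31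

/-- The graded algebra endomorphism `φ_M` of `k[x₁,x₂,x₃]` with `φ_M(xᵢ) = Σⱼ M i j · xⱼ`. -/
noncomputable def phiM {k : Type*} [Field k] (M : Matrix (Fin 3) (Fin 3) k) :
    MvPolynomial (Fin 3) k →ₐ[k] MvPolynomial (Fin 3) k :=
  aeval fun i => ∑ j, C (M i j) * X j

/-- `φ_M` is a graded Poisson automorphism (for invertible `M`) iff it preserves the bracket. -/
def IsPoissonAut {k : Type*} [Field k]
    (br : MvPolynomial (Fin 3) k → MvPolynomial (Fin 3) k → MvPolynomial (Fin 3) k)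
    (M : Matrix (Fin 3) (Fin 3) k) : Prop :=
  ∀ f g, phiM M (br f g) = br (phiM M f) (phiM M g)

/-- `φ_M` is a Poisson reflection: a graded Poisson automorphism of finite order whose
eigenvalues are `1, 1, ξ` for some root of unity `ξ ≠ 1`. -/
def IsPoissonReflection {k : Type*} [Field k]
    (br : MvPolynomial (Fin 3) k → MvPolynomial (Fin 3) k → MvPolynomial (Fin 3) k)
    (M : Matrix (Fin 3) (Fin 3) k) : Prop :=
  IsPoissonAut br M ∧ (∃ n, 0 < n ∧ M ^ n = 1) ∧
    ∃ ξ : k, ξ ≠ 1 ∧ (∃ m, 0 < m ∧ ξ ^ m = 1) ∧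
      M.charpoly = (Polynomial.X - 1) ^ 2 * (Polynomial.X - Polynomial.C ξ)

section Aux

variable {k : Type*} [Field k] (p12 p23 p31 : MvPolynomial (Fin 3) k)

lemma jb_C_left (a : k) (g) : jacBracket p12 p23 p31 (C a) g = 0 := by
  simp [jacBracket]

lemma jb_C_right (a : k) (f) : jacBracket p12 p23 p31 f (C a) = 0 := by
  simp [jacBracket]

lemma jb_add_left (f₁ f₂ g) : jacBracket p12 p23 p31 (f₁ + f₂) g
    = jacBracket p12 p23 p31 f₁ g + jacBracket p12 p23 p31 f₂ g := by
  simp only [jacBracket, map_add]; ring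

lemma jb_add_right (f g₁ g₂) : jacBracket p12 p23 p31 f (g₁ + g₂)
    = jacBracket p12 p23 p31 f g₁ + jacBracket p12 p23 p31 f g₂ := by
  simp only [jacBracket, map_add]; ring

lemma jb_mul_left (f₁ f₂ g) : jacBracket p12 p23 p31 (f₁ * f₂) g
    = f₁ * jacBracket p12 p23 p31 f₂ g + f₂ * jacBracket p12 p23 p31 f₁ g := by
  simp only [jacBracket, pderiv_mul]; ring

lemma jb_mul_right (f g₁ g₂) : jacBracket p12 p23 p31 f (g₁ * g₂)
    = g₁ * jacBracket p12 p23 p31 f g₂ + g₂ * jacBracket p12 p23 p31 f g₁ := by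
  simp only [jacBracket, pderiv_mul]; ring

lemma jb_gen_ext (φ : MvPolynomial (Fin 3) k →ₐ[k] MvPolynomial (Fin 3) k)
    (h : ∀ i j, φ (jacBracket p12 p23 p31 (X i) (X j))
        = jacBracket p12 p23 p31 (φ (X i)) (φ (X j))) :
    ∀ f g, φ (jacBracket p12 p23 p31 f g) = jacBracket p12 p23 p31 (φ f) (φ g) := by
  have aux : ∀ (i : Fin 3) g, φ (jacBracket p12 p23 p31 (X i) g)
      = jacBracket p12 p23 p31 (φ (X i)) (φ g) := by
    intro i g
    induction g using MvPolynomial.induction_on with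
    | C a => simp [jb_C_right, map_zero, AlgHom.commutes, algebraMap_eq]
    | add p q hp hq => simp [jb_add_right, map_add, hp, hq]
    | mul_X p j hp =>
        rw [jb_mul_right, map_add, map_mul, map_mul, hp, h, map_mul, jb_mul_right]
  intro f g
  induction f using MvPolynomial.induction_on with
  | C a => simp [jb_C_left, map_zero, AlgHom.commutes, algebraMap_eq]
  | add p q hp hq => simp [jb_add_left, map_add, hp, hq]
  | mul_X p j hp =>
      rw [jb_mul_left, map_add, map_mul, map_mul, hp, aux, map_mul, jb_mul_left]

lemma pderiv_lin (u0 u1 u2 : k) (l : Fin 3) :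
    pderiv l (C u0 * X 0 + C u1 * X 1 + C u2 * X 2 : MvPolynomial (Fin 3) k)
      = C (![u0, u1, u2] l) := by
  fin_cases l <;> simp [pderiv_X, Pi.single_apply]

lemma jb_lin (u0 u1 u2 v0 v1 v2 : k) :
    jacBracket p12 p23 p31 (C u0 * X 0 + C u1 * X 1 + C u2 * X 2)
        (C v0 * X 0 + C v1 * X 1 + C v2 * X 2)
      = C (u0 * v1 - u1 * v0) * p12 + C (u1 * v2 - u2 * v1) * p23
        + C (u2 * v0 - u0 * v2) * p31 := by
  simp only [jacBracket, pderiv_lin, map_sub, map_mul]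
  norm_num [Matrix.cons_val_zero, Matrix.cons_val_one, Matrix.head_cons, Matrix.cons_val_two,
    Matrix.tail_cons]

lemma phiM_X (M : Matrix (Fin 3) (Fin 3) k) (i : Fin 3) :
    phiM M (X i) = C (M i 0) * X 0 + C (M i 1) * X 1 + C (M i 2) * X 2 := by
  simp [phiM, Fin.sum_univ_three]

lemma phiM_C (M : Matrix (Fin 3) (Fin 3) k) (a : k) : phiM M (C a) = C a := by
  simp [phiM, algebraMap_eq]

lemma aut_of_form (a b c d : k) :
    IsPoissonAut (jacBracket 0 (2 * X 0 * X 1) (X 0 ^ 2)) (!![a,0,0;0,b,0;c,d,a]) := by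
  refine jb_gen_ext _ _ _ (phiM _) ?_
  intro i j
  fin_cases i <;> fin_cases j <;>
  · simp only [phiM_X, jb_lin]
    simp only [jacBracket, pderiv_X, Pi.single_apply]
    simp [phiM_X, phiM_C, map_ofNat, Matrix.cons_val_zero, Matrix.cons_val_one,
      Matrix.head_cons]
    try ring_nf

lemma charpoly_tri (a b c d : k) :
    (!![a,0,0;0,b,0;c,d,a] : Matrix (Fin 3) (Fin 3) k).charpoly
      = (Polynomial.X - Polynomial.C a)^2 * (Polynomial.X - Polynomial.C b) := by
  rw [Matrix.charpoly, Matrix.det_fin_three]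
  simp [Matrix.charmatrix_apply, Matrix.one_apply]
  ring

set_option linter.unusedTactic false in
lemma pow_form (x c d : k) (n : ℕ) :
    (!![1,0,0;0,x,0;c,d,1] : Matrix (Fin 3) (Fin 3) k)^n
      = !![1,0,0;0,x^n,0;(n:k)*c, d * ∑ i ∈ Finset.range n, x^i, 1] := by
  induction n with
  | zero => simp [Matrix.one_fin_three]
  | succ n ih =>
      rw [pow_succ, ih, Matrix.mul_fin_three]
      ext i j
      fin_cases i <;> fin_cases j <;>
        simp [pow_succ, geom_sum_succ] <;> (try push_cast) <;> (try ring)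

lemma aut_form_iff [CharZero k] (M : Matrix (Fin 3) (Fin 3) k) (hM : IsUnit M.det) :
    IsPoissonAut (jacBracket 0 (2 * X 0 * X 1) (X 0 ^ 2)) M ↔
      ∃ a b c d : k, a ≠ 0 ∧ b ≠ 0 ∧ M = !![a, 0, 0; 0, b, 0; c, d, a] := by
  constructor
  · intro H
    have hd : M.det ≠ 0 := hM.ne_zero
    rw [Matrix.det_fin_three] at hd
    -- h3 : from {x3, x1}
    have h3 := H (X 2) (X 0)
    rw [show jacBracket (0 : MvPolynomial (Fin 3) k) (2 * X 0 * X 1) (X 0 ^ 2) (X 2) (X 0)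
          = X 0 ^ 2 by simp [jacBracket, pderiv_X, Pi.single_apply],
        map_pow, phiM_X, phiM_X, jb_lin] at h3
    have h01 : M 0 1 = 0 := by
      have e := congrArg (eval ![(0:k),1,0]) h3
      simpa using e
    have h02 : M 0 2 = 0 := by
      have e := congrArg (eval ![(0:k),0,1]) h3
      simpa using e
    have e3 : M 0 0 ^ 2 = M 2 2 * M 0 0 - M 2 0 * M 0 2 := by
      have e := congrArg (eval ![(1:k),0,0]) h3
      simp at e
      linear_combination e
    -- h1 : from {x1, x2} = 0
    have h1 := H (X 0) (X 1)
    rw [show jacBracket (0 : MvPolynomial (Fin 3) k) (2 * X 0 * X 1) (X 0 ^ 2) (X 0) (X 1)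
          = 0 by simp [jacBracket, pderiv_X, Pi.single_apply],
        map_zero, phiM_X, phiM_X, jb_lin] at h1
    have e1 : M 0 2 * M 1 0 - M 0 0 * M 1 2 = 0 := by
      have e := congrArg (eval ![(1:k),0,0]) h1
      simp at e
      linear_combination -e
    -- h2 : from {x2, x3} = 2 x1 x2
    have h2 := H (X 1) (X 2)
    rw [show jacBracket (0 : MvPolynomial (Fin 3) k) (2 * X 0 * X 1) (X 0 ^ 2) (X 1) (X 2)
          = 2 * X 0 * X 1 by simp [jacBracket, pderiv_X, Pi.single_apply],
        map_mul, map_mul, map_ofNat, phiM_X, phiM_X, phiM_X, jb_lin] at h2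
    have e2 : 2 * (M 0 0 * M 1 0) = M 1 2 * M 2 0 - M 1 0 * M 2 2 := by
      have e := congrArg (eval ![(1:k),0,0]) h2
      simp at e
      linear_combination e
    have h00 : M 0 0 ≠ 0 := by
      intro h; apply hd; rw [h01, h02, h]; ring
    have h12 : M 1 2 = 0 := by
      have hz : M 0 0 * M 1 2 = 0 := by linear_combination -e1 + M 1 0 * h02
      rcases mul_eq_zero.mp hz with h | h
      · exact absurd h h00
      · exact h
    have h22 : M 2 2 = M 0 0 := by
      have hz : M 0 0 * M 2 2 = M 0 0 * M 0 0 := by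
        linear_combination -e3 + M 2 0 * h02
      exact mul_left_cancel₀ h00 hz
    have h10 : M 1 0 = 0 := by
      have hz : (3:k) * (M 0 0 * M 1 0) = 0 := by
        linear_combination e2 + M 2 0 * h12 - M 1 0 * h22
      have h30 : (3:k) ≠ 0 := by norm_num
      rcases mul_eq_zero.mp hz with h | h
      · exact absurd h h30
      · rcases mul_eq_zero.mp h with h' | h'
        · exact absurd h' h00
        · exact h'
    have h11 : M 1 1 ≠ 0 := by
      intro h; apply hd; rw [h01, h02, h12, h]; ring
    exact ⟨M 0 0, M 1 1, M 2 0, M 2 1, h00, h11, by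
      ext i j; fin_cases i <;> fin_cases j <;> simp [h01, h02, h10, h12, h22]⟩
  · rintro ⟨a, b, c, d, ha, hb, rfl⟩
    exact aut_of_form a b c d

lemma refl_form_iff [CharZero k] (M : Matrix (Fin 3) (Fin 3) k) (hM : IsUnit M.det) :
    IsPoissonReflection (jacBracket 0 (2 * X 0 * X 1) (X 0 ^ 2)) M ↔
      ∃ ξ d : k, ξ ≠ 1 ∧ (∃ m, 0 < m ∧ ξ ^ m = 1) ∧ M = !![1, 0, 0; 0, ξ, 0; 0, d, 1] := by
  constructor
  · rintro ⟨Haut, ⟨n, hn, hMn⟩, ξ, hξ1, hξroot, hcp⟩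
    obtain ⟨a, b, c, d, ha, hb, hMe⟩ := (aut_form_iff M hM).mp Haut
    subst hMe
    rw [charpoly_tri] at hcp
    have ev : ∀ t : k, (t-a)^2*(t-b) = (t-1)^2*(t-ξ) := by
      intro t
      have h := congrArg (Polynomial.eval t) hcp
      simp only [Polynomial.eval_mul, Polynomial.eval_pow, Polynomial.eval_sub,
        Polynomial.eval_one, Polynomial.eval_X, Polynomial.eval_C] at h
      linear_combination h
    have ha1 : a = 1 := by
      by_contra hA
      have h1' : a = ξ := by
        have h : (0:k) = (a-1)^2*(a-ξ) := by linear_combination ev a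
        rcases mul_eq_zero.mp h.symm with h' | h'
        · exact absurd (sub_eq_zero.mp (pow_eq_zero_iff two_ne_zero |>.mp h')) hA
        · exact sub_eq_zero.mp h'
      have hb1 : b = 1 := by
        have h : ((1:k)-a)^2*(1-b) = 0 := by linear_combination ev 1
        rcases mul_eq_zero.mp h with h' | h'
        · exact absurd (sub_eq_zero.mp (pow_eq_zero_iff two_ne_zero |>.mp h')).symm hA
        · exact (sub_eq_zero.mp h').symm
      have hx : ξ * (ξ - 1) = 0 := by
        have h := ev (ξ+1)
        rw [h1', hb1] at h
        linear_combination -h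
      have hξ0 : ξ = 0 := by
        rcases mul_eq_zero.mp hx with h' | h'
        · exact h'
        · exact absurd (sub_eq_zero.mp h') hξ1
      have h := ev 2
      rw [h1', hb1, hξ0] at h
      norm_num at h
    have hbξ : b = ξ := by
      have h0 := ev ξ
      rw [ha1] at h0
      have h : (ξ-1)^2*(ξ-b) = 0 := by linear_combination h0
      rcases mul_eq_zero.mp h with h' | h'
      · exact absurd (sub_eq_zero.mp (pow_eq_zero_iff two_ne_zero |>.mp h')) hξ1
      · exact (sub_eq_zero.mp h').symm
    subst ha1; subst hbξ
    rw [pow_form, Matrix.one_fin_three] at hMn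
    have hc := congrFun (congrFun hMn 2) 0
    simp at hc
    have hc0 : c = 0 := by
      rcases hc with h | h
      · exact absurd h hn.ne'
      · exact h
    exact ⟨b, d, hξ1, hξroot, by rw [hc0]⟩
  · rintro ⟨ξ, d, hξ1, ⟨m, hm, hξm⟩, rfl⟩
    have hξ0 : ξ ≠ 0 := by
      intro h; rw [h, zero_pow hm.ne'] at hξm; exact zero_ne_one hξm
    refine ⟨(aut_form_iff _ hM).mpr ⟨1, ξ, 0, d, one_ne_zero, hξ0, rfl⟩,
      ⟨m, hm, ?_⟩, ξ, hξ1, ⟨m, hm, hξm⟩, ?_⟩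
    · rw [pow_form, hξm]
      have hs : ∑ i ∈ Finset.range m, ξ^i = 0 := by
        rw [geom_sum_eq hξ1, hξm]; simp
      rw [hs, Matrix.one_fin_three]
      norm_num
    · rw [charpoly_tri]; norm_num

end Aux

/-- Case `{x₁,x₂} = 0`, `{x₂,x₃} = 2x₁x₂`, `{x₃,x₁} = x₁²`. -/
theorem stmt_4 {k : Type*} [Field k] [IsAlgClosed k] [CharZero k]
    (M : Matrix (Fin 3) (Fin 3) k) (hM : IsUnit M.det) :
    (IsPoissonAut (jacBracket 0 (2 * X 0 * X 1) (X 0 ^ 2)) M ↔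
      ∃ a b c d : k, a ≠ 0 ∧ b ≠ 0 ∧ M = !![a, 0, 0; 0, b, 0; c, d, a]) ∧
    (IsPoissonReflection (jacBracket 0 (2 * X 0 * X 1) (X 0 ^ 2)) M ↔
      ∃ ξ d : k, ξ ≠ 1 ∧ (∃ m, 0 < m ∧ ξ ^ m = 1) ∧ M = !![1, 0, 0; 0, ξ, 0; 0, d, 1]) :=
  ⟨aut_form_iff M hM, refl_form_iff M hM⟩
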